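/- arXiv:2409.09187 — 2 statements merged into one kernel-verified Lean document; each statement's English description precedes it below -/
import Mathlib

section
/- Let A be an m×n real matrix with singular values σ₁ ≥ … ≥ σ_n and let Ṽ ∈ ℝ^{n×r} be orthonormal with orthogonal completion Q₂ = [Ṽ, Ṽ⊥]. Set Ã = AQ₂ and let Ã₂ denote its m×(n−r) right block, E_SVD = [0, Ã₂]. Let σ_i^SVD = σ_i(AṼ) for i = 1,…,r be the one-sided projected SVD approximations of the singular values. For each i define τ_i^SVD = 2‖Ã₂‖₂ / (σ_i − 2‖E_SVD‖₂). Then for every i ∈ {1,…,r} with τ_i^SVD > 0, |σ_i − σ_i^SVD| ≤ 4‖Ã₂‖₂² / (σ_i − 2‖E_SVD‖₂). -/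
open Matrix

/-- The tuple `f` sorted in nonincreasing order. -/
noncomputable def sortedDesc {α : Type*} [Fintype α] (f : α → ℝ) :
    Fin (Fintype.card α) → ℝ := fun i =>
  let g : Fin (Fintype.card α) → ℝ := f ∘ (Fintype.equivFin α).symm
  g (Tuple.sort g i.rev)

/-- Singular values of a real matrix, in nonincreasing order (generic index types). -/
noncomputable def sVals {m n : Type*} [Fintype m] [Fintype n] [DecidableEq n]
    (M : Matrix m n ℝ) : Fin (Fintype.card n) → ℝ :=
  sortedDesc fun j => Real.sqrt ((show (Mᵀ * M).IsHermitian by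
    simpa using Matrix.isHermitian_conjTranspose_mul_self M).eigenvalues j)

/-- Singular values of a real `Fin m × Fin n` matrix, in nonincreasing order,
`singularValues M 0` being the largest. -/
noncomputable def singularValues {m n : ℕ} (M : Matrix (Fin m) (Fin n) ℝ) :
    Fin n → ℝ := fun i =>
  let g : Fin n → ℝ := fun j =>
    Real.sqrt ((show (Mᵀ * M).IsHermitian by
      simpa using Matrix.isHermitian_conjTranspose_mul_self M).eigenvalues j)
  g (Tuple.sort g i.rev)

/-- The spectral (operator 2-)norm of a real matrix. -/
noncomputable def specNorm {m n : Type*} [Fintype m] [Fintype n] [DecidableEq n]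
    (M : Matrix m n ℝ) : ℝ :=
  ‖LinearMap.toContinuousLinearMap (Matrix.toEuclideanLin M)‖

/-- The Moore-Penrose pseudoinverse of a real matrix, defined via the Tikhonov
regularization limit of `(AᵀA + εI)⁻¹Aᵀ` as `ε` tends to `0` from above. -/
noncomputable def pinv {m n : Type*} [Fintype m] [Fintype n] [DecidableEq n]
    (A : Matrix m n ℝ) : Matrix n m ℝ :=
  Filter.limUnder (nhdsWithin 0 (Set.Ioi 0)) fun ε : ℝ => (Aᵀ * A + ε • 1)⁻¹ * Aᵀ

section SVDAux

open Submodule Module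
open scoped RealInnerProductSpace

private lemma aux_dot {p q : ℕ} (M : Matrix (Fin p) (Fin q) ℝ) (x : EuclideanSpace ℝ (Fin q)) :
    ⟪x, (Matrix.toEuclideanLin (Mᵀ * M)) x⟫ = ‖(Matrix.toEuclideanLin M) x‖^2 := by
  rw [← real_inner_self_eq_norm_sq]
  simp only [PiLp.inner_apply, RCLike.inner_apply, starRingEnd_apply, star_trivial]
  show ((Mᵀ * M) *ᵥ x) ⬝ᵥ x = (M *ᵥ x) ⬝ᵥ (M *ᵥ x)
  rw [dotProduct_comm _ x.ofLp, ← Matrix.mulVec_mulVec, Matrix.dotProduct_mulVec, Matrix.vecMul_transpose]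

private lemma eig_subspace {N : ℕ} (B : Matrix (Fin N) (Fin N) ℝ) (hB : B.IsHermitian)
    (F : Finset (Fin N)) :
    ∃ S : Submodule ℝ (EuclideanSpace ℝ (Fin N)), finrank ℝ S = F.card ∧
      ∀ x ∈ S, ∃ c : Fin N → ℝ,
        ‖x‖^2 = ∑ j ∈ F, (c j)^2 ∧
        ⟪x, (Matrix.toEuclideanLin B) x⟫ = ∑ j ∈ F, hB.eigenvalues j * (c j)^2 := by
  set u : Fin N → EuclideanSpace ℝ (Fin N) := fun j => hB.eigenvectorBasis j with hu
  have hon : Orthonormal ℝ u := hB.eigenvectorBasis.orthonormal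
  have key : ∀ j, (Matrix.toEuclideanLin B) (u j) = hB.eigenvalues j • u j := by
    intro j
    have h2 := hB.mulVec_eigenvectorBasis j
    refine PiLp.ext fun k => ?_
    have : ((Matrix.toEuclideanLin B) (u j)) k = (B *ᵥ ⇑(hB.eigenvectorBasis j)) k := rfl
    rw [this, h2]
    rfl
  refine ⟨span ℝ (Set.range fun j : F => u j), ?_, ?_⟩
  · have : (Set.range fun j : F => u j) = Set.range (u ∘ Subtype.val) := rfl
    rw [this, finrank_span_eq_card ((hon.comp _ Subtype.val_injective).linearIndependent)]
    simp
  · intro x hx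
    obtain ⟨c', hc⟩ := (mem_span_range_iff_exists_fun ℝ).mp hx
    classical
    set c : Fin N → ℝ := fun j => if h : j ∈ F then c' ⟨j, h⟩ else 0 with hcdef
    have hx2 : x = ∑ j ∈ F, c j • u j := by
      rw [← hc, ← Finset.sum_coe_sort F (fun j => c j • u j)]
      refine Finset.sum_congr rfl fun j _ => ?_
      simp [hcdef]
    refine ⟨c, ?_, ?_⟩
    · rw [← real_inner_self_eq_norm_sq, hx2, hon.inner_sum]
      simp [pow_two]
    · have hBx : (Matrix.toEuclideanLin B) x = ∑ j ∈ F, (hB.eigenvalues j * c j) • u j := by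
        rw [hx2, map_sum]
        refine Finset.sum_congr rfl fun j _ => ?_
        rw [(Matrix.toEuclideanLin B).map_smul, key, smul_smul, mul_comm]
      rw [hBx, hx2, hon.inner_sum]
      refine Finset.sum_congr rfl fun j _ => ?_
      simp [pow_two]; ring

private lemma sorted_ge {N : ℕ} (g : Fin N → ℝ) (i : Fin N) :
    ∃ F : Finset (Fin N), F.card = (i : ℕ) + 1 ∧
      ∀ j ∈ F, g (Tuple.sort g i.rev) ≤ g j := by
  refine ⟨(Finset.Ici i.rev).image (Tuple.sort g), ?_, ?_⟩
  · rw [Finset.card_image_of_injective _ (Tuple.sort g).injective, Fin.card_Ici]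
    have := i.isLt
    simp only [Fin.val_rev]
    omega
  · intro j hj
    obtain ⟨k, hk, rfl⟩ := Finset.mem_image.mp hj
    exact Tuple.monotone_sort g (Finset.mem_Ici.mp hk)

private lemma sorted_le {N : ℕ} (g : Fin N → ℝ) (i : Fin N) :
    ∃ G : Finset (Fin N), G.card = N - (i : ℕ) ∧
      ∀ j ∈ G, g j ≤ g (Tuple.sort g i.rev) := by
  refine ⟨(Finset.Iic i.rev).image (Tuple.sort g), ?_, ?_⟩
  · rw [Finset.card_image_of_injective _ (Tuple.sort g).injective, Fin.card_Iic]
    have := i.isLt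
    simp only [Fin.val_rev]
    omega
  · intro j hj
    obtain ⟨k, hk, rfl⟩ := Finset.mem_image.mp hj
    exact Tuple.monotone_sort g (Finset.mem_Iic.mp hk)

private lemma conjT_real {p q : ℕ} (M : Matrix (Fin p) (Fin q) ℝ) : Mᴴ = Mᵀ := rfl

private lemma sv_nonneg {p q : ℕ} (M : Matrix (Fin p) (Fin q) ℝ) (i : Fin q) :
    0 ≤ singularValues M i := Real.sqrt_nonneg _

private lemma eigval_nonneg {p q : ℕ} (M : Matrix (Fin p) (Fin q) ℝ) (j : Fin q) :
    0 ≤ (show (Mᵀ * M).IsHermitian by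
      simpa using Matrix.isHermitian_conjTranspose_mul_self M).eigenvalues j :=
  (Matrix.posSemidef_conjTranspose_mul_self M).eigenvalues_nonneg j

private lemma cf_lb {p q : ℕ} (M : Matrix (Fin p) (Fin q) ℝ) (i : Fin q) :
    ∃ S : Submodule ℝ (EuclideanSpace ℝ (Fin q)), finrank ℝ S = (i : ℕ) + 1 ∧
      ∀ x ∈ S, (singularValues M i)^2 * ‖x‖^2 ≤ ‖(Matrix.toEuclideanLin M) x‖^2 := by
  set hH := (show (Mᵀ * M).IsHermitian by
    simpa using Matrix.isHermitian_conjTranspose_mul_self M) with hHdef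
  set g : Fin q → ℝ := fun j => Real.sqrt (hH.eigenvalues j) with hg
  have hsv : singularValues M i = g (Tuple.sort g i.rev) := rfl
  obtain ⟨F, hFcard, hF⟩ := sorted_ge g i
  obtain ⟨S, hrank, hS⟩ := eig_subspace (Mᴴ * M) hH F
  refine ⟨S, by rw [hrank, hFcard], ?_⟩
  intro x hx
  obtain ⟨c, hnorm, hinner⟩ := hS x hx
  have hq : ⟪x, (Matrix.toEuclideanLin (Mᴴ * M)) x⟫ = ‖(Matrix.toEuclideanLin M) x‖^2 := by
    rw [conjT_real]; exact aux_dot M x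
  rw [← hq, hinner, hsv, hnorm, Finset.mul_sum]
  refine Finset.sum_le_sum fun j hj => ?_
  have h1 : g (Tuple.sort g i.rev) ≤ g j := hF j hj
  have h0 : (0:ℝ) ≤ g (Tuple.sort g i.rev) := Real.sqrt_nonneg _
  have h2 : (g (Tuple.sort g i.rev))^2 ≤ (g j)^2 := pow_le_pow_left₀ h0 h1 2
  have h3 : (g j)^2 = Matrix.IsHermitian.eigenvalues (A := Mᴴ * M) hH j :=
    Real.sq_sqrt (eigval_nonneg M j)
  nlinarith [sq_nonneg (c j)]

private lemma cf_ub {p q : ℕ} (M : Matrix (Fin p) (Fin q) ℝ) (i : Fin q)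
    (S : Submodule ℝ (EuclideanSpace ℝ (Fin q))) (hS : (i : ℕ) + 1 ≤ finrank ℝ S) :
    ∃ x, x ∈ S ∧ x ≠ 0 ∧
      ‖(Matrix.toEuclideanLin M) x‖^2 ≤ (singularValues M i)^2 * ‖x‖^2 := by
  set hH := (show (Mᵀ * M).IsHermitian by
    simpa using Matrix.isHermitian_conjTranspose_mul_self M) with hHdef
  set g : Fin q → ℝ := fun j => Real.sqrt (hH.eigenvalues j) with hg
  have hsv : singularValues M i = g (Tuple.sort g i.rev) := rfl
  obtain ⟨G, hGcard, hG⟩ := sorted_le g i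
  obtain ⟨T, hrank, hT⟩ := eig_subspace (Mᴴ * M) hH G
  have hdim : finrank ℝ (EuclideanSpace ℝ (Fin q)) = q := finrank_euclideanSpace_fin
  have hsum := Submodule.finrank_sup_add_finrank_inf_eq S T
  have hle : finrank ℝ ↥(S ⊔ T) ≤ q := by
    have h := Submodule.finrank_le (S ⊔ T)
    rwa [hdim] at h
  have hio : (S ⊓ T) ≠ ⊥ := by
    intro hbot
    rw [hbot, finrank_bot, hrank, hGcard] at hsum
    have := i.isLt
    omega
  obtain ⟨x, hxm, hx0⟩ := Submodule.exists_mem_ne_zero_of_ne_bot hio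
  refine ⟨x, hxm.1, hx0, ?_⟩
  obtain ⟨c, hnorm, hinner⟩ := hT x hxm.2
  have hq : ⟪x, (Matrix.toEuclideanLin (Mᴴ * M)) x⟫ = ‖(Matrix.toEuclideanLin M) x‖^2 := by
    rw [conjT_real]; exact aux_dot M x
  rw [← hq, hinner, hsv, hnorm, Finset.mul_sum]
  refine Finset.sum_le_sum fun j hj => ?_
  have h1 : g j ≤ g (Tuple.sort g i.rev) := hG j hj
  have h0 : (0:ℝ) ≤ g j := Real.sqrt_nonneg _
  have h2 : (g j)^2 ≤ (g (Tuple.sort g i.rev))^2 := pow_le_pow_left₀ h0 h1 2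
  have h3 : (g j)^2 = Matrix.IsHermitian.eigenvalues (A := Mᴴ * M) hH j :=
    Real.sq_sqrt (eigval_nonneg M j)
  nlinarith [sq_nonneg (c j)]

private lemma map_rank {p q : ℕ} (M : Matrix (Fin p) (Fin q) ℝ)
    (S : Submodule ℝ (EuclideanSpace ℝ (Fin q)))
    (hinj : ∀ x ∈ S, (Matrix.toEuclideanLin M) x = 0 → x = 0) :
    finrank ℝ (S.map (Matrix.toEuclideanLin M)) = finrank ℝ S := by
  set f := Matrix.toEuclideanLin M
  have h1 := LinearMap.finrank_range_add_finrank_ker (f.domRestrict S)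
  have h2 : LinearMap.range (f.domRestrict S) = S.map f := LinearMap.range_domRestrict S f
  have h3 : LinearMap.ker (f.domRestrict S) = ⊥ := by
    rw [LinearMap.ker_eq_bot']
    intro x hx
    exact Subtype.ext (hinj x.1 x.2 hx)
  rw [h2, h3, finrank_bot] at h1
  simpa using h1

private lemma push {p q : ℕ} (M : Matrix (Fin p) (Fin q) ℝ) (c : ℝ) (hc : 0 < c)
    (S : Submodule ℝ (EuclideanSpace ℝ (Fin q)))
    (hS : ∀ x ∈ S, c * ‖x‖^2 ≤ ‖(Matrix.toEuclideanLin M) x‖^2) :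
    ∃ S' : Submodule ℝ (EuclideanSpace ℝ (Fin p)), finrank ℝ S' = finrank ℝ S ∧
      ∀ u ∈ S', c * ‖u‖^2 ≤ ‖(Matrix.toEuclideanLin Mᵀ) u‖^2 := by
  set f := Matrix.toEuclideanLin M with hf
  refine ⟨S.map f, map_rank M S ?_, ?_⟩
  · intro x hx hx0
    have := hS x hx
    rw [hx0] at this
    simp only [norm_zero] at this
    have hn : ‖x‖^2 ≤ 0 := by nlinarith
    have h : ‖x‖ = 0 := by nlinarith [sq_nonneg ‖x‖, norm_nonneg x]
    exact norm_eq_zero.mp h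
  · rintro u ⟨x, hx, rfl⟩
    by_cases hx0 : x = 0
    · simp [hx0]
    have ha : 0 < ‖x‖ := norm_pos_iff.mpr hx0
    have h3 : c * ‖x‖^2 ≤ ‖f x‖^2 := hS x hx
    have h1 : ‖f x‖^2 = ⟪x, (Matrix.toEuclideanLin Mᵀ) (f x)⟫ := by
      rw [← real_inner_self_eq_norm_sq]
      simp only [PiLp.inner_apply, RCLike.inner_apply, starRingEnd_apply, star_trivial]
      show (M *ᵥ x) ⬝ᵥ (M *ᵥ x) = (Mᵀ *ᵥ (M *ᵥ x)) ⬝ᵥ x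
      rw [dotProduct_comm _ x.ofLp, Matrix.dotProduct_mulVec (v := x), Matrix.vecMul_transpose]
    have h2 : ⟪x, (Matrix.toEuclideanLin Mᵀ) (f x)⟫ ≤ ‖x‖ * ‖(Matrix.toEuclideanLin Mᵀ) (f x)‖ :=
      real_inner_le_norm _ _
    have h5 : ‖f x‖^2 ≤ ‖x‖ * ‖(Matrix.toEuclideanLin Mᵀ) (f x)‖ := h1 ▸ h2
    have h6 : ‖f x‖^2 * ‖f x‖^2 ≤ (‖x‖ * ‖(Matrix.toEuclideanLin Mᵀ) (f x)‖) *
        (‖x‖ * ‖(Matrix.toEuclideanLin Mᵀ) (f x)‖) :=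
      mul_self_le_mul_self (sq_nonneg _) h5
    have h7 : c * ‖x‖^2 * ‖f x‖^2 ≤ ‖f x‖^2 * ‖f x‖^2 :=
      mul_le_mul_of_nonneg_right h3 (sq_nonneg _)
    nlinarith [mul_pos ha ha, sq_nonneg ‖(Matrix.toEuclideanLin Mᵀ) (f x)‖]

private lemma iso_norm {n r : ℕ} (V : Matrix (Fin n) (Fin r) ℝ) (hV : Vᵀ * V = 1)
    (x : EuclideanSpace ℝ (Fin r)) : ‖(Matrix.toEuclideanLin V) x‖ = ‖x‖ := by
  have h := aux_dot V x
  rw [hV] at h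
  have h1 : (Matrix.toEuclideanLin (1 : Matrix (Fin r) (Fin r) ℝ)) x = x := by
    refine PiLp.ext fun k => ?_
    show ((1 : Matrix (Fin r) (Fin r) ℝ) *ᵥ x) k = x k
    rw [Matrix.one_mulVec]
  rw [h1, real_inner_self_eq_norm_sq] at h
  have := norm_nonneg ((Matrix.toEuclideanLin V) x)
  have := norm_nonneg x
  nlinarith [h]

private lemma spec_bound {p q : ℕ} (M : Matrix (Fin p) (Fin q) ℝ) (x : EuclideanSpace ℝ (Fin q)) :
    ‖(Matrix.toEuclideanLin M) x‖ ≤ specNorm M * ‖x‖ := by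
  have := (LinearMap.toContinuousLinearMap (Matrix.toEuclideanLin M)).le_opNorm x
  simpa [specNorm] using this

private lemma specNorm_nonneg' {m' n' : Type*} [Fintype m'] [Fintype n'] [DecidableEq n']
    (M : Matrix m' n' ℝ) : 0 ≤ specNorm M :=
  norm_nonneg _

private lemma spec_bound_T {p q : ℕ} (M : Matrix (Fin p) (Fin q) ℝ)
    (u : EuclideanSpace ℝ (Fin p)) :
    ‖(Matrix.toEuclideanLin Mᵀ) u‖ ≤ specNorm M * ‖u‖ := by
  set w := (Matrix.toEuclideanLin Mᵀ) u with hw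
  by_cases hw0 : w = 0
  · rw [hw0, norm_zero]
    exact mul_nonneg (specNorm_nonneg' M) (norm_nonneg u)
  have h1 : ‖w‖^2 = ⟪(Matrix.toEuclideanLin M) w, u⟫ := by
    rw [← real_inner_self_eq_norm_sq]
    simp only [PiLp.inner_apply, RCLike.inner_apply, starRingEnd_apply, star_trivial]
    show (Mᵀ *ᵥ u) ⬝ᵥ (Mᵀ *ᵥ u) = u ⬝ᵥ (M *ᵥ (Mᵀ *ᵥ u))
    rw [dotProduct_comm u.ofLp, Matrix.dotProduct_mulVec (v := Mᵀ *ᵥ u), Matrix.vecMul_transpose]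
  have h2 : ⟪(Matrix.toEuclideanLin M) w, u⟫ ≤ ‖(Matrix.toEuclideanLin M) w‖ * ‖u‖ :=
    real_inner_le_norm _ _
  have h3 : ‖(Matrix.toEuclideanLin M) w‖ ≤ specNorm M * ‖w‖ := spec_bound M w
  have hwpos : 0 < ‖w‖ := norm_pos_iff.mpr hw0
  have h4 : ‖w‖^2 ≤ specNorm M * ‖w‖ * ‖u‖ := by
    calc ‖w‖^2 ≤ ‖(Matrix.toEuclideanLin M) w‖ * ‖u‖ := h1 ▸ h2
    _ ≤ specNorm M * ‖w‖ * ‖u‖ := mul_le_mul_of_nonneg_right h3 (norm_nonneg u)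
  nlinarith

private lemma block_norm {m n r s : ℕ} (A : Matrix (Fin m) (Fin n) ℝ)
    (V : Matrix (Fin n) (Fin r) ℝ) (W : Matrix (Fin n) (Fin s) ℝ)
    (h : V * Vᵀ + W * Wᵀ = 1) (u : EuclideanSpace ℝ (Fin m)) :
    ‖(Matrix.toEuclideanLin (A * V)ᵀ) u‖^2 + ‖(Matrix.toEuclideanLin (A * W)ᵀ) u‖^2 =
      ‖(Matrix.toEuclideanLin Aᵀ) u‖^2 := by
  simp only [← real_inner_self_eq_norm_sq]
  simp only [PiLp.inner_apply, RCLike.inner_apply, starRingEnd_apply, star_trivial]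
  show ((A * V)ᵀ *ᵥ u) ⬝ᵥ ((A * V)ᵀ *ᵥ u) + ((A * W)ᵀ *ᵥ u) ⬝ᵥ ((A * W)ᵀ *ᵥ u) =
    (Aᵀ *ᵥ u) ⬝ᵥ (Aᵀ *ᵥ u)
  have e1 : ∀ (k : ℕ) (B : Matrix (Fin n) (Fin k) ℝ),
      (A * B)ᵀ *ᵥ u = Bᵀ *ᵥ (Aᵀ *ᵥ u) := by
    intro k B
    rw [Matrix.transpose_mul, ← Matrix.mulVec_mulVec]
  rw [e1 r V, e1 s W]
  set w := Aᵀ *ᵥ u with hwdef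
  have e2 : ∀ (k : ℕ) (B : Matrix (Fin n) (Fin k) ℝ),
      (Bᵀ *ᵥ w) ⬝ᵥ (Bᵀ *ᵥ w) = w ⬝ᵥ ((B * Bᵀ) *ᵥ w) := by
    intro k B
    rw [Matrix.dotProduct_mulVec (v := Bᵀ *ᵥ w), Matrix.vecMul_transpose,
      Matrix.mulVec_mulVec, dotProduct_comm]
  rw [e2 r V, e2 s W, ← dotProduct_add, ← Matrix.add_mulVec, h, Matrix.one_mulVec]

private lemma sv_restrict_le {m n r : ℕ} (hrn : r ≤ n) (A : Matrix (Fin m) (Fin n) ℝ)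
    (tV : Matrix (Fin n) (Fin r) ℝ) (hV : tVᵀ * tV = 1) (i : Fin r) :
    (singularValues (A * tV) i)^2 ≤ (singularValues A (Fin.castLE hrn i))^2 := by
  obtain ⟨S, hSr, hSlb⟩ := cf_lb (A * tV) i
  have hinj : ∀ x ∈ S, (Matrix.toEuclideanLin tV) x = 0 → x = 0 := by
    intro x _ h0
    have h := iso_norm tV hV x
    rw [h0, norm_zero] at h
    exact norm_eq_zero.mp h.symm
  have hrank : ((Fin.castLE hrn i : Fin n) : ℕ) + 1 ≤
      finrank ℝ (S.map (Matrix.toEuclideanLin tV)) := by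
    rw [map_rank tV S hinj, hSr, Fin.coe_castLE]
  obtain ⟨y, hyS, hy0, hyub⟩ := cf_ub A (Fin.castLE hrn i) _ hrank
  obtain ⟨x, hxS, rfl⟩ := Submodule.mem_map.mp hyS
  have hcomp : (Matrix.toEuclideanLin A) ((Matrix.toEuclideanLin tV) x)
      = (Matrix.toEuclideanLin (A * tV)) x := by
    refine PiLp.ext fun k => ?_
    show (A *ᵥ (tV *ᵥ x)) k = ((A * tV) *ᵥ x) k
    rw [Matrix.mulVec_mulVec]
  have e : ‖(Matrix.toEuclideanLin tV) x‖ = ‖x‖ := iso_norm tV hV x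
  have h1 : (singularValues (A * tV) i)^2 * ‖x‖^2 ≤
      ‖(Matrix.toEuclideanLin (A * tV)) x‖^2 := hSlb x hxS
  rw [hcomp, e] at hyub
  have hx : 0 < ‖x‖ := by
    rw [← e]
    exact norm_pos_iff.mpr hy0
  nlinarith [mul_pos hx hx]

private lemma sv_restrict_ge {m n r s : ℕ} (hrn : r ≤ n) (A : Matrix (Fin m) (Fin n) ℝ)
    (tV : Matrix (Fin n) (Fin r) ℝ) (tVperp : Matrix (Fin n) (Fin s) ℝ)
    (hsum : tV * tVᵀ + tVperp * tVperpᵀ = 1) (i : Fin r) :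
    (singularValues A (Fin.castLE hrn i))^2 ≤
      (singularValues (A * tV) i)^2 + (specNorm (A * tVperp))^2 := by
  set σ := singularValues A (Fin.castLE hrn i) with hσd
  set sv := singularValues (A * tV) i with hsd
  set β := specNorm (A * tVperp) with hβd
  by_cases hcase : σ^2 ≤ β^2
  · nlinarith [sq_nonneg sv]
  push_neg at hcase
  have hσpos : (0:ℝ) < σ^2 := lt_of_le_of_lt (sq_nonneg β) hcase
  obtain ⟨S, hSr, hSlb⟩ := cf_lb A (Fin.castLE hrn i)
  obtain ⟨S₂, hS₂r, hS₂⟩ := push A (σ^2) hσpos S hSlb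
  have hS₂' : ∀ u ∈ S₂, (σ^2 - β^2) * ‖u‖^2 ≤
      ‖(Matrix.toEuclideanLin (A * tV)ᵀ) u‖^2 := by
    intro u hu
    have hb := block_norm A tV tVperp hsum u
    have h2 : ‖(Matrix.toEuclideanLin (A * tVperp)ᵀ) u‖ ≤ β * ‖u‖ := spec_bound_T _ u
    have h2' : ‖(Matrix.toEuclideanLin (A * tVperp)ᵀ) u‖^2 ≤ β^2 * ‖u‖^2 := by
      nlinarith [norm_nonneg ((Matrix.toEuclideanLin (A * tVperp)ᵀ) u), norm_nonneg u]
    have h3 := hS₂ u hu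
    linarith
  obtain ⟨S₃, hS₃r, hS₃⟩ := push (A * tV)ᵀ (σ^2 - β^2) (by linarith) S₂ hS₂'
  rw [Matrix.transpose_transpose] at hS₃
  have hrank : (i : ℕ) + 1 ≤ finrank ℝ S₃ := by
    rw [hS₃r, hS₂r, hSr, Fin.coe_castLE]
  obtain ⟨y, hyS, hy0, hyub⟩ := cf_ub (A * tV) i S₃ hrank
  have h1 := hS₃ y hyS
  have hy : 0 < ‖y‖ := norm_pos_iff.mpr hy0
  nlinarith [mul_pos hy hy]

private lemma final_arith (σ sv β e : ℝ) (hσ0 : 0 ≤ σ) (hs0 : 0 ≤ sv) (hβ0 : 0 ≤ β)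
    (he0 : 0 ≤ e) (hd : 0 < σ - 2 * e) (hD1 : sv^2 ≤ σ^2) (hD2 : σ^2 ≤ sv^2 + β^2) :
    |σ - sv| ≤ 4 * β^2 / (σ - 2 * e) := by
  have hσs : sv ≤ σ := by nlinarith
  rw [abs_of_nonneg (by linarith)]
  rw [le_div_iff₀ hd]
  have h2 : σ - 2 * e ≤ σ + sv := by linarith
  have h3 : (σ - sv) * (σ - 2 * e) ≤ (σ - sv) * (σ + sv) :=
    mul_le_mul_of_nonneg_left h2 (by linarith)
  nlinarith

end SVDAux

/-- Accuracy of the singular values extracted by the one-sided projected SVD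
approximation, `σ_i^SVD = σ_i(AṼ)`:
`|σ_i − σ_i^SVD| ≤ 4‖Ã₂‖₂² / (σ_i − 2‖E_SVD‖₂)` whenever `τ_i^SVD > 0`. -/
theorem svd_approximation_singular_value_bound
    (m n r : ℕ) (hrn : r ≤ n)
    (A : Matrix (Fin m) (Fin n) ℝ)
    (tV : Matrix (Fin n) (Fin r) ℝ)
    (tVperp : Matrix (Fin n) (Fin (n - r)) ℝ)
    (hV : tVᵀ * tV = 1)
    (Q₂ : Matrix (Fin n) (Fin r ⊕ Fin (n - r)) ℝ)
    (hQ₂ : Q₂ = Matrix.fromCols tV tVperp)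
    (hQ₂o : Q₂ᵀ * Q₂ = 1) (hQ₂o' : Q₂ * Q₂ᵀ = 1)
    (Atil : Matrix (Fin m) (Fin r ⊕ Fin (n - r)) ℝ)
    (hAtil : Atil = A * Q₂)
    (Atil₂ : Matrix (Fin m) (Fin (n - r)) ℝ) (hAtil₂ : Atil₂ = Atil.toCols₂)
    (ESVD : Matrix (Fin m) (Fin r ⊕ Fin (n - r)) ℝ)
    (hESVD : ESVD = Matrix.fromCols 0 Atil₂)
    (σSVD : Fin r → ℝ) (hσSVD : σSVD = singularValues (A * tV))
    (τ : Fin r → ℝ)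
    (hτ : ∀ i, τ i = 2 * specNorm Atil₂ /
      (singularValues A (Fin.castLE hrn i) - 2 * specNorm ESVD)) :
    ∀ i, 0 < τ i →
      |singularValues A (Fin.castLE hrn i) - σSVD i| ≤
        4 * specNorm Atil₂ ^ 2 /
          (singularValues A (Fin.castLE hrn i) - 2 * specNorm ESVD) := by
  intro i hτi
  have hA2 : Atil₂ = A * tVperp := by
    rw [hAtil₂, hAtil, hQ₂, Matrix.mul_fromCols, Matrix.toCols₂_fromCols]
  have hsumV : tV * tVᵀ + tVperp * tVperpᵀ = 1 := by
    rw [hQ₂, Matrix.transpose_fromCols, Matrix.fromCols_mul_fromRows] at hQ₂o'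
    exact hQ₂o'
  have hd : 0 < singularValues A (Fin.castLE hrn i) - 2 * specNorm ESVD := by
    rw [hτ i] at hτi
    by_contra hle
    push_neg at hle
    have hnum : 0 ≤ 2 * specNorm Atil₂ :=
      mul_nonneg (by norm_num) (specNorm_nonneg' Atil₂)
    have := div_nonpos_of_nonneg_of_nonpos hnum hle
    linarith
  have hD1 := sv_restrict_le hrn A tV hV i
  have hD2 := sv_restrict_ge hrn A tV tVperp hsumV i
  rw [← hA2] at hD2
  rw [hσSVD]
  exact final_arith _ _ _ _ (sv_nonneg A _) (sv_nonneg (A * tV) _)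
    (specNorm_nonneg' Atil₂) (specNorm_nonneg' ESVD) hd hD1 hD2
end

section
/- Let Ā be an m×n real matrix partitioned into blocks Ā₁₁ ((r+ℓ)×r), Ā₁₂ ((r+ℓ)×(n−r)), Ā₂₁ ((m−r−ℓ)×r), Ā₂₂ ((m−r−ℓ)×(n−r)), and assume rank(Ā₁₁) = r. Then the generalized Nyström approximation of Ā with sketch matrices X = [I_r; 0] ∈ ℝ^{n×r} and Y = [I_{r+ℓ}; 0] ∈ ℝ^{m×(r+ℓ)}, namely ĀX(Y*ĀX)†Y*Ā, equals the block matrix [[Ā₁₁, Ā₁₁Ā₁₁†Ā₁₂],[Ā₂₁, Ā₂₁Ā₁₁†Ā₁₂]]. -/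
open Matrix

lemma isUnit_of_rank_eq_card {n : Type*} [Fintype n] [DecidableEq n]
    (B : Matrix n n ℝ) (h : B.rank = Fintype.card n) : IsUnit B := by
  rw [← Matrix.mulVec_surjective_iff_isUnit]
  have : LinearMap.range B.mulVecLin = ⊤ := by
    apply Submodule.eq_top_of_finrank_eq
    rw [← Matrix.rank, h, Module.finrank_fintype_fun_eq_card]
  intro v
  exact (LinearMap.range_eq_top.mp this) v

lemma pinv_of_isUnit {m n : Type*} [Fintype m] [Fintype n] [DecidableEq n]
    (A : Matrix m n ℝ) (h : IsUnit (Aᵀ * A)) : pinv A = (Aᵀ * A)⁻¹ * Aᵀ := by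
  have hdet : IsUnit (Aᵀ * A).det := (Matrix.isUnit_iff_isUnit_det _).mp h
  have hcont : ContinuousAt (fun ε : ℝ => (Aᵀ * A + ε • 1)⁻¹ * Aᵀ) 0 := by
    have h1 : ContinuousAt (fun ε : ℝ => Aᵀ * A + ε • (1 : Matrix n n ℝ)) 0 :=
      (continuous_const.add (continuous_id.smul continuous_const)).continuousAt
    have h2 : ContinuousAt Inv.inv (Aᵀ * A + (0:ℝ) • 1) := by
      apply continuousAt_matrix_inv
      have : (Ring.inverse : ℝ → ℝ) = Inv.inv := by
        funext x; exact Ring.inverse_eq_inv x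
      rw [this]
      apply continuousAt_inv₀
      simpa using hdet.ne_zero
    have hmul : Continuous (fun M : Matrix n n ℝ => M * Aᵀ) :=
      continuous_id.matrix_mul continuous_const
    exact ContinuousAt.comp (f := fun ε : ℝ => (Aᵀ * A + ε • 1)⁻¹) hmul.continuousAt
      (ContinuousAt.comp (f := fun ε : ℝ => Aᵀ * A + ε • 1) h2 h1)
  have : Filter.Tendsto (fun ε : ℝ => (Aᵀ * A + ε • 1)⁻¹ * Aᵀ)
      (nhdsWithin 0 (Set.Ioi 0)) (nhds ((Aᵀ * A)⁻¹ * Aᵀ)) := by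
    have := hcont.tendsto.mono_left (nhdsWithin_le_nhds (s := Set.Ioi (0:ℝ)))
    simpa using this
  exact this.limUnder_eq

lemma pinv_mul_self {m n : Type*} [Fintype m] [Fintype n] [DecidableEq n]
    (A : Matrix m n ℝ) (h : A.rank = Fintype.card n) : pinv A * A = 1 := by
  have hu : IsUnit (Aᵀ * A) := isUnit_of_rank_eq_card _ (by rw [Matrix.rank_transpose_mul_self, h])
  rw [pinv_of_isUnit A hu, Matrix.mul_assoc,
    Matrix.nonsing_inv_mul _ ((Matrix.isUnit_iff_isUnit_det _).mp hu)]

/-- **Equation (3.3)**: the generalized Nyström approximation of a block matrix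
`Ā = [[Ā₁₁, Ā₁₂], [Ā₂₁, Ā₂₂]]` with sketch matrices `X = [I_r; 0]` and
`Y = [I_{r+ℓ}; 0]`, when `rank(Ā₁₁) = r`, equals
`[[Ā₁₁, Ā₁₁Ā₁₁†Ā₁₂], [Ā₂₁, Ā₂₁Ā₁₁†Ā₁₂]]`. -/
theorem generalized_nystrom_of_block_matrix
    (m n r ℓ : ℕ)
    (A₁₁ : Matrix (Fin (r + ℓ)) (Fin r) ℝ)
    (A₁₂ : Matrix (Fin (r + ℓ)) (Fin (n - r)) ℝ)
    (A₂₁ : Matrix (Fin (m - (r + ℓ))) (Fin r) ℝ)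
    (A₂₂ : Matrix (Fin (m - (r + ℓ))) (Fin (n - r)) ℝ)
    (Abar : Matrix (Fin (r + ℓ) ⊕ Fin (m - (r + ℓ))) (Fin r ⊕ Fin (n - r)) ℝ)
    (hAbar : Abar = Matrix.fromBlocks A₁₁ A₁₂ A₂₁ A₂₂)
    (hrank : A₁₁.rank = r)
    (X : Matrix (Fin r ⊕ Fin (n - r)) (Fin r) ℝ)
    (hX : X = Matrix.fromRows (1 : Matrix (Fin r) (Fin r) ℝ) 0)
    (Y : Matrix (Fin (r + ℓ) ⊕ Fin (m - (r + ℓ))) (Fin (r + ℓ)) ℝ)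
    (hY : Y = Matrix.fromRows (1 : Matrix (Fin (r + ℓ)) (Fin (r + ℓ)) ℝ) 0) :
    Abar * X * pinv (Yᵀ * Abar * X) * (Yᵀ * Abar) =
      Matrix.fromBlocks A₁₁ (A₁₁ * pinv A₁₁ * A₁₂) A₂₁ (A₂₁ * pinv A₁₁ * A₁₂) := by
  subst hAbar hX hY
  have hAX : Matrix.fromBlocks A₁₁ A₁₂ A₂₁ A₂₂ * Matrix.fromRows (1 : Matrix (Fin r) (Fin r) ℝ) 0 =
      Matrix.fromRows A₁₁ A₂₁ := by
    erw [fromBlocks_mul_fromRows]; simp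
  have hYT : (Matrix.fromRows (1 : Matrix (Fin (r + ℓ)) (Fin (r + ℓ)) ℝ) 0)ᵀ *
      Matrix.fromBlocks A₁₁ A₁₂ A₂₁ A₂₂ = Matrix.fromCols A₁₁ A₁₂ := by
    erw [transpose_fromRows, fromCols_mul_fromBlocks]; simp
  have hYAX : Matrix.fromCols A₁₁ A₁₂ * Matrix.fromRows (1 : Matrix (Fin r) (Fin r) ℝ) 0 = A₁₁ := by
    erw [fromCols_mul_fromRows]; simp
  have hP : pinv A₁₁ * A₁₁ = 1 := pinv_mul_self A₁₁ (by simpa using hrank)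
  erw [hAX, hYT, hYAX, fromRows_mul, fromRows_mul_fromCols]
  rw [Matrix.mul_assoc A₁₁, hP, Matrix.mul_one, Matrix.mul_assoc A₂₁, hP, Matrix.mul_one]
end
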